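/- Let τ be a positive semidefinite matrix on a bipartite space ℂᵐ ⊗ ℂⁿ. Then Tr[τ] ≤ ‖τ^Γ‖₁, with equality if and only if τ^Γ is positive semidefinite. Consequently every τ ∈ T satisfies Tr[τ] ≤ 1, and τ ∈ T has Tr[τ] = 1 if and only if τ is a PPT state (τ^Γ ≥ 0 and Tr τ = 1). -/

import Mathlib

open Matrix
open scoped ComplexOrder

noncomputable def traceNorm {ι : Type*} [Fintype ι] [DecidableEq ι]
    (A : Matrix ι ι ℂ) : ℝ :=
  (((Matrix.posSemidef_conjTranspose_mul_self A).1.eigenvectorUnitary.1 *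
      Matrix.diagonal ((fun x : ℝ => (x : ℂ)) ∘ (Real.sqrt ·) ∘ (Matrix.posSemidef_conjTranspose_mul_self A).1.eigenvalues) *
      (star (Matrix.posSemidef_conjTranspose_mul_self A).1.eigenvectorUnitary : Matrix ι ι ℂ)).trace).re

noncomputable def mfun {ι : Type*} [Fintype ι] [DecidableEq ι] (g : ℝ → ℝ)
    (A : Matrix ι ι ℂ) : Matrix ι ι ℂ :=
  if hA : A.IsHermitian then
    (hA.eigenvectorUnitary : Matrix ι ι ℂ) *
      Matrix.diagonal (fun i => (g (hA.eigenvalues i) : ℂ)) *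
      (star hA.eigenvectorUnitary : Matrix ι ι ℂ)
  else 0

noncomputable def divDiff {ι : Type*} (g : ℝ → ℝ) (a : ι → ℝ) : Matrix ι ι ℝ :=
  Matrix.of fun i j =>
    if a i = a j then deriv g (a i) else (g (a i) - g (a j)) / (a i - a j)

noncomputable def Dop {ι : Type*} [Fintype ι] [DecidableEq ι] (g : ℝ → ℝ)
    {A : Matrix ι ι ℂ} (hA : A.IsHermitian) (B : Matrix ι ι ℂ) : Matrix ι ι ℂ :=
  (hA.eigenvectorUnitary : Matrix ι ι ℂ) *
    (((divDiff g hA.eigenvalues).map Complex.ofReal) ⊙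
      ((star hA.eigenvectorUnitary : Matrix ι ι ℂ) * B *
        (hA.eigenvectorUnitary : Matrix ι ι ℂ))) *
    (star hA.eigenvectorUnitary : Matrix ι ι ℂ)

noncomputable def relEnt {ι : Type*} [Fintype ι] [DecidableEq ι]
    (ρ σ : Matrix ι ι ℂ) : ℝ :=
  ((ρ * (mfun Real.log ρ - mfun Real.log σ)).trace).re

def ptrans {m n : Type*} (A : Matrix (m × n) (m × n) ℂ) : Matrix (m × n) (m × n) ℂ :=
  Matrix.of fun p q => A (p.1, q.2) (q.1, p.2)

lemma star_mul_self_unit {ι : Type*} [Fintype ι] [DecidableEq ι]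
    (U : Matrix.unitaryGroup ι ℂ) :
    (star U : Matrix ι ι ℂ) * (U : Matrix ι ι ℂ) = 1 :=
  Matrix.mem_unitaryGroup_iff'.mp U.2

lemma conj_diag_mul {ι : Type*} [Fintype ι] [DecidableEq ι]
    (U : Matrix.unitaryGroup ι ℂ) (d e : ι → ℂ) :
    ((U : Matrix ι ι ℂ) * Matrix.diagonal d * (star U : Matrix ι ι ℂ)) *
      ((U : Matrix ι ι ℂ) * Matrix.diagonal e * (star U : Matrix ι ι ℂ)) =
    (U : Matrix ι ι ℂ) * Matrix.diagonal (fun i => d i * e i) * (star U : Matrix ι ι ℂ)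
    := by
  have h : Matrix.diagonal d * Matrix.diagonal e
      = Matrix.diagonal (fun i => d i * e i) := by
    rw [Matrix.diagonal_mul_diagonal]
  rw [← h]
  calc _ = (U : Matrix ι ι ℂ) * Matrix.diagonal d *
      (((star U : Matrix ι ι ℂ) * (U : Matrix ι ι ℂ)) * Matrix.diagonal e) *
        (star U : Matrix ι ι ℂ) := by noncomm_ring
  _ = _ := by rw [star_mul_self_unit]; noncomm_ring

lemma trace_conj_unit {ι : Type*} [Fintype ι] [DecidableEq ι]
    (U : Matrix.unitaryGroup ι ℂ) (d : ι → ℂ) :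
    ((U : Matrix ι ι ℂ) * Matrix.diagonal d * (star U : Matrix ι ι ℂ)).trace
      = ∑ i, d i := by
  rw [Matrix.trace_mul_cycle, star_mul_self_unit, Matrix.one_mul, Matrix.trace_diagonal]

/-- trace norm of a Hermitian matrix is the sum of abs of eigenvalues -/
lemma traceNorm_hermitian {ι : Type*} [Fintype ι] [DecidableEq ι]
    {A : Matrix ι ι ℂ} (hA : A.IsHermitian) :
    traceNorm A = ∑ i, |hA.eigenvalues i| := by
  set U := hA.eigenvectorUnitary with hU
  set B : Matrix ι ι ℂ := (U : Matrix ι ι ℂ) *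
      Matrix.diagonal (fun i => ((|hA.eigenvalues i| : ℝ) : ℂ)) * (star U : Matrix ι ι ℂ)
    with hBdef
  have hB : B.PosSemidef := by
    apply Matrix.PosSemidef.mul_mul_conjTranspose_same
    refine Matrix.posSemidef_diagonal_iff.mpr fun i => ?_
    exact Complex.zero_le_real.mpr (abs_nonneg _)
  have hsq : B ^ 2 = Aᴴ * A := by
    have hAA : Aᴴ * A = A * A := by rw [hA.eq]
    rw [pow_two, hAA]
    conv_rhs => rw [hA.spectral_theorem]
    simp only [Unitary.conjStarAlgAut_apply]
    rw [hBdef, ← hU, conj_diag_mul, conj_diag_mul]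
    have h2 : (fun i => ((|hA.eigenvalues i| : ℝ) : ℂ) * ((|hA.eigenvalues i| : ℝ) : ℂ))
        = fun i => ((RCLike.ofReal ∘ hA.eigenvalues) i : ℂ) *
            ((RCLike.ofReal ∘ hA.eigenvalues) i : ℂ) := by
      funext i
      simp only [Function.comp_apply, RCLike.ofReal_alg, Complex.real_smul, mul_one,
        ← Complex.ofReal_mul, abs_mul_abs_self]
    rw [h2]
  have hsqrt : B = (Matrix.posSemidef_conjTranspose_mul_self A).1.eigenvectorUnitary.1 *
      Matrix.diagonal ((fun x : ℝ => (x : ℂ)) ∘ (Real.sqrt ·) ∘ (Matrix.posSemidef_conjTranspose_mul_self A).1.eigenvalues) *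
      (star (Matrix.posSemidef_conjTranspose_mul_self A).1.eigenvectorUnitary : Matrix ι ι ℂ) := by
    have e1 : B = cfc (fun x : ℝ => |x|) A := by rw [hA.cfc_eq]; rfl
    have e2 : (Matrix.posSemidef_conjTranspose_mul_self A).1.eigenvectorUnitary.1 *
        Matrix.diagonal ((fun x : ℝ => (x : ℂ)) ∘ (Real.sqrt ·) ∘ (Matrix.posSemidef_conjTranspose_mul_self A).1.eigenvalues) *
        (star (Matrix.posSemidef_conjTranspose_mul_self A).1.eigenvectorUnitary : Matrix ι ι ℂ)
        = cfc Real.sqrt (Aᴴ * A) := by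
      rw [(Matrix.posSemidef_conjTranspose_mul_self A).1.cfc_eq]; rfl
    have hAs : IsSelfAdjoint A := hA
    rw [e1, e2, hA.eq, ← sq, ← cfc_comp_pow (f := fun x : ℝ => Real.sqrt x) (a := A) (n := 2)]
    congr 1
    funext x
    exact (Real.sqrt_sq_eq_abs x).symm
  rw [traceNorm, ← hsqrt, hBdef, trace_conj_unit, Complex.re_sum]
  simp

lemma trace_hermitian {ι : Type*} [Fintype ι] [DecidableEq ι]
    {A : Matrix ι ι ℂ} (hA : A.IsHermitian) :
    A.trace.re = ∑ i, hA.eigenvalues i := by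
  conv_lhs => rw [hA.spectral_theorem]
  rw [show (RCLike.ofReal ∘ hA.eigenvalues : ι → ℂ)
      = fun i => ((hA.eigenvalues i : ℝ) : ℂ) from rfl,
    Unitary.conjStarAlgAut_apply, trace_conj_unit, Complex.re_sum]
  simp

theorem trace_le_traceNorm_partialTranspose
    {m n : ℕ} (τ : Matrix (Fin m × Fin n) (Fin m × Fin n) ℂ) (hτ : τ.PosSemidef) :
    (τ.trace).re ≤ traceNorm (ptrans τ) ∧
      ((τ.trace).re = traceNorm (ptrans τ) ↔ (ptrans τ).PosSemidef) ∧
      (traceNorm (ptrans τ) ≤ 1 →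
        (τ.trace).re ≤ 1 ∧
          ((τ.trace).re = 1 ↔ (ptrans τ).PosSemidef ∧ (τ.trace).re = 1)) := by
  have hPH : (ptrans τ).IsHermitian := by
    ext p q
    simp only [Matrix.conjTranspose_apply, ptrans, Matrix.of_apply]
    have := congrFun (congrFun hτ.isHermitian (p.1, q.2)) (q.1, p.2)
    simpa [Matrix.conjTranspose_apply] using this
  have htr : (ptrans τ).trace = τ.trace := by
    simp [Matrix.trace, ptrans, Matrix.diag]
  have key1 : (τ.trace).re = ∑ i, hPH.eigenvalues i := by
    rw [← htr]; exact trace_hermitian hPH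
  have key2 : traceNorm (ptrans τ) = ∑ i, |hPH.eigenvalues i| :=
    traceNorm_hermitian hPH
  have part1 : (τ.trace).re ≤ traceNorm (ptrans τ) := by
    rw [key1, key2]
    exact Finset.sum_le_sum fun i _ => le_abs_self _
  have part2 : (τ.trace).re = traceNorm (ptrans τ) ↔ (ptrans τ).PosSemidef := by
    constructor
    · intro h
      apply hPH.posSemidef_iff_eigenvalues_nonneg.mpr
      intro i
      rw [key1, key2] at h
      have hz : ∑ i, (|hPH.eigenvalues i| - hPH.eigenvalues i) = 0 := by
        rw [Finset.sum_sub_distrib, ← h, sub_self]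
      have := (Finset.sum_eq_zero_iff_of_nonneg
        (fun i _ => sub_nonneg.mpr (le_abs_self _))).mp hz i (Finset.mem_univ i)
      have habs : |hPH.eigenvalues i| = hPH.eigenvalues i := by linarith
      rw [← habs]; exact abs_nonneg _
    · intro h
      rw [key1, key2]
      refine Finset.sum_congr rfl fun i _ => ?_
      exact (abs_of_nonneg (h.eigenvalues_nonneg i)).symm
  refine ⟨part1, part2, fun h1 => ⟨part1.trans h1, ?_⟩⟩
  constructor
  · intro h
    refine ⟨part2.mp (le_antisymm part1 (by rw [h]; exact h1)), h⟩
  · exact fun h => h.2
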